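/- Branching-tree existence (construction 2): let h ∈ ℕ and let R5 ⊆ (Bool × Bool × Bool × Bool × Bool) be a 5-ary Boolean relation containing (true,false,true,true,false), (true,false,false,false,false), (false,true,true,false,true), and (false,true,false,false,false). Fix m < 2^h and define x i j = true iff j = m / 2^(h−i) (integer division), l i = true iff m / 2^(h−i−1) = 2·(m / 2^(h−i)) (the path to leaf m turns left at level i), and r i = ¬ l i. Then l i ≠ r i for all i < h; x 0 0 = true; for j < 2^h one has x h j = true iff j = m; and for all i < h and j < 2^i the tuple (l i, r i, x i j, x (i+1) (2j), x (i+1) (2j+1)) belongs to R5. -/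
import Mathlib


theorem stmt_14 (h : ℕ) (R5 : Set (Bool × Bool × Bool × Bool × Bool))
    (h1 : (true, false, true, true, false) ∈ R5)
    (h2 : (true, false, false, false, false) ∈ R5)
    (h3 : (false, true, true, false, true) ∈ R5)
    (h4 : (false, true, false, false, false) ∈ R5)
    (m : ℕ) (hm : m < 2 ^ h) :
    let x : ℕ → ℕ → Bool := fun i j => decide (j = m / 2 ^ (h - i))
    let l : ℕ → Bool := fun i => decide (m / 2 ^ (h - i - 1) = 2 * (m / 2 ^ (h - i)))
    let r : ℕ → Bool := fun i => !(l i)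
    (∀ i < h, l i ≠ r i) ∧
    x 0 0 = true ∧
    (∀ j < 2 ^ h, (x h j = true ↔ j = m)) ∧
    (∀ i < h, ∀ j < 2 ^ i,
      (l i, r i, x i j, x (i + 1) (2 * j), x (i + 1) (2 * j + 1)) ∈ R5) := by
  intro x l r
  refine ⟨fun i _ => by simp [r, Bool.eq_not], ?_, fun j _ => by simp [x], ?_⟩
  · simp [x, Nat.div_eq_of_lt hm]
  · intro i hi j hj
    have hsub : h - i - 1 + 1 = h - i := by omega
    have hdiv : m / 2 ^ (h - i - 1) / 2 = m / 2 ^ (h - i) := by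
      rw [Nat.div_div_eq_div_mul, ← pow_succ, hsub]
    set a := m / 2 ^ (h - i) with ha
    set b := m / 2 ^ (h - i - 1) with hb
    have hsub2 : h - (i + 1) = h - i - 1 := by omega
    have hb2 : b = 2 * a ∨ b = 2 * a + 1 := by omega
    by_cases hja : j = a
    · rcases hb2 with hc | hc
      · have hl : l i = true := by simp [l, ← hb, ← ha, hc]
        have : (l i, r i, x i j, x (i + 1) (2 * j), x (i + 1) (2 * j + 1))
            = (true, false, true, true, false) := by
          simp [r, hl, x, ← ha, hsub2, ← hb, hc, hja]
        rw [this]; exact h1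
      · have hl : l i = false := by simp [l, ← hb, ← ha]; omega
        have : (l i, r i, x i j, x (i + 1) (2 * j), x (i + 1) (2 * j + 1))
            = (false, true, true, false, true) := by
          simp [r, hl, x, ← ha, hsub2, ← hb, hc, hja]
        rw [this]; exact h3
    · have hx1 : x i j = false := by simp [x, ← ha, hja]
      have hx2 : x (i + 1) (2 * j) = false := by
        simp [x, hsub2, ← hb]; omega
      have hx3 : x (i + 1) (2 * j + 1) = false := by
        simp [x, hsub2, ← hb]; omega
      rcases hb2 with hc | hc
      · have hl : l i = true := by simp [l, ← hb, ← ha, hc]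
        have : (l i, r i, x i j, x (i + 1) (2 * j), x (i + 1) (2 * j + 1))
            = (true, false, false, false, false) := by
          simp [r, hl, hx1, hx2, hx3]
        rw [this]; exact h2
      · have hl : l i = false := by simp [l, ← hb, ← ha]; omega
        have : (l i, r i, x i j, x (i + 1) (2 * j), x (i + 1) (2 * j + 1))
            = (false, true, false, false, false) := by
          simp [r, hl, hx1, hx2, hx3]
        rw [this]; exact h4
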